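/- Let ν, κ, γ, a, b, 𝒞 be positive real constants, let c₁ = (b + γ/(3𝒞))/(3b𝒞 + 2γ), c₂ = 1/(3b𝒞 + 2γ), c₃ = (2κb𝒞 + 2aγ)/(3b𝒞 + 2γ), c₅(ϱ) = (4κγ + 9ab𝒞)ϱ²/(3(3b𝒞 + 2γ)) + (2/3)γ + b𝒞, and let R₀ > 0. If 0 < β₃ ≤ min{ 2ν/3, c₃/(16𝒞c₁), 1/(2R₀) }, then there exists a constant C₄ > 0 such that for all ϱ with 0 ≤ ϱ ≤ R₀ and all complex numbers ρ, d, Θ, Ξ: C₄·ϱ²·[ (1/2)|ρ|² − β₃ϱ·Re(ρ·conj(d)) + (1/2)|d|² + (c₁/(4𝒞))|Θ|² + (3c₂/(4γ))|Ξ|² ] ≤ (3β₃/4)ϱ²|ρ|² + (ν − β₃)ϱ²|d|² + ( c₁c₃/(4𝒞) − 2β₃c₁² )ϱ²|Θ|² + (3c₂c₅(ϱ)/(2γ))|Ξ|². -/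

import Mathlib

open Complex

/-- Abstract form of the domination estimate. -/
lemma lyap_aux (C₄ β₃ ϱ aΘ bΘ aΞ bΞ νβ r s t u x : ℝ)
    (hC₄ : 0 < C₄) (hβ₃ : 0 < β₃) (hϱ : 0 ≤ ϱ)
    (hr : 0 ≤ r) (hs : 0 ≤ s)
    (hx : -(r * s) ≤ x)
    (hβϱ : β₃ * ϱ ≤ 1 / 2)
    (h1 : C₄ ≤ β₃) (h2 : C₄ * (3 / 4) ≤ νβ)
    (haΘ : 0 ≤ aΘ) (hΘ : C₄ * aΘ ≤ bΘ)
    (haΞ : 0 ≤ aΞ) (hΞ : C₄ * ϱ ^ 2 * aΞ ≤ bΞ) :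
    C₄ * ϱ ^ 2 * ((1 / 2) * r ^ 2 - β₃ * ϱ * x + (1 / 2) * s ^ 2
        + aΘ * t ^ 2 + aΞ * u ^ 2)
      ≤ (3 * β₃ / 4) * ϱ ^ 2 * r ^ 2 + νβ * ϱ ^ 2 * s ^ 2
        + bΘ * ϱ ^ 2 * t ^ 2 + bΞ * u ^ 2 := by
  have hβϱ0 : 0 ≤ β₃ * ϱ := mul_nonneg hβ₃.le hϱ
  have hCϱ0 : 0 ≤ C₄ * ϱ ^ 2 := mul_nonneg hC₄.le (sq_nonneg _)
  -- the cross term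
  have hx1 : β₃ * ϱ * (-(r * s)) ≤ β₃ * ϱ * x := mul_le_mul_of_nonneg_left hx hβϱ0
  have hx2 : β₃ * ϱ * (r * s) ≤ (1 / 2) * (r * s) :=
    mul_le_mul_of_nonneg_right hβϱ (mul_nonneg hr hs)
  have hx3 : (1 / 2) * (r * s) ≤ (1 / 4) * r ^ 2 + (1 / 4) * s ^ 2 := by
    nlinarith [sq_nonneg (r - s)]
  have hbr : (1 / 2) * r ^ 2 - β₃ * ϱ * x + (1 / 2) * s ^ 2 ≤
      (3 / 4) * r ^ 2 + (3 / 4) * s ^ 2 := by nlinarith [hx1, hx2, hx3]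
  have hmul := mul_le_mul_of_nonneg_left hbr hCϱ0
  have hAr : 0 ≤ ϱ ^ 2 * r ^ 2 := mul_nonneg (sq_nonneg _) (sq_nonneg _)
  have hBs : 0 ≤ ϱ ^ 2 * s ^ 2 := mul_nonneg (sq_nonneg _) (sq_nonneg _)
  have hρ1 : C₄ * (3 / 4) * (ϱ ^ 2 * r ^ 2) ≤ (3 * β₃ / 4) * (ϱ ^ 2 * r ^ 2) :=
    mul_le_mul_of_nonneg_right (by linarith) hAr
  have hs1 : C₄ * (3 / 4) * (ϱ ^ 2 * s ^ 2) ≤ νβ * (ϱ ^ 2 * s ^ 2) :=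
    mul_le_mul_of_nonneg_right h2 hBs
  have heqA : C₄ * ϱ ^ 2 * ((3 / 4) * r ^ 2 + (3 / 4) * s ^ 2)
      = C₄ * (3 / 4) * (ϱ ^ 2 * r ^ 2) + C₄ * (3 / 4) * (ϱ ^ 2 * s ^ 2) := by ring
  have heqA1 : (3 * β₃ / 4) * (ϱ ^ 2 * r ^ 2) = (3 * β₃ / 4) * ϱ ^ 2 * r ^ 2 := by ring
  have heqA2 : νβ * (ϱ ^ 2 * s ^ 2) = νβ * ϱ ^ 2 * s ^ 2 := by ring
  -- Θ block
  have hΘ1 : C₄ * aΘ * (ϱ ^ 2 * t ^ 2) ≤ bΘ * (ϱ ^ 2 * t ^ 2) :=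
    mul_le_mul_of_nonneg_right hΘ (mul_nonneg (sq_nonneg _) (sq_nonneg _))
  have heqB : C₄ * ϱ ^ 2 * (aΘ * t ^ 2) = C₄ * aΘ * (ϱ ^ 2 * t ^ 2) := by ring
  have heqB1 : bΘ * (ϱ ^ 2 * t ^ 2) = bΘ * ϱ ^ 2 * t ^ 2 := by ring
  -- Ξ block
  have hΞ1 : C₄ * ϱ ^ 2 * aΞ * u ^ 2 ≤ bΞ * u ^ 2 :=
    mul_le_mul_of_nonneg_right hΞ (sq_nonneg _)
  have heqC : C₄ * ϱ ^ 2 * (aΞ * u ^ 2) = C₄ * ϱ ^ 2 * aΞ * u ^ 2 := by ring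
  -- combine
  have hsplit : C₄ * ϱ ^ 2 * ((1 / 2) * r ^ 2 - β₃ * ϱ * x + (1 / 2) * s ^ 2
        + aΘ * t ^ 2 + aΞ * u ^ 2)
      = C₄ * ϱ ^ 2 * ((1 / 2) * r ^ 2 - β₃ * ϱ * x + (1 / 2) * s ^ 2)
        + C₄ * ϱ ^ 2 * (aΘ * t ^ 2) + C₄ * ϱ ^ 2 * (aΞ * u ^ 2) := by ring
  linarith [hmul, hρ1, hs1, hΘ1, hΞ1]

set_option maxHeartbeats 1000000 in
/-- The dissipation term dominates `ϱ²` times the low-frequency Lyapunov functional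
for `0 ≤ ϱ ≤ R₀`, provided `β₃` is small enough. -/
theorem lyapunov_dissipation_domination (ν κ γ a b 𝒞 : ℝ)
    (hν : 0 < ν) (hκ : 0 < κ) (hγ : 0 < γ) (ha : 0 < a) (hb : 0 < b) (h𝒞 : 0 < 𝒞)
    (c₁ c₂ c₃ : ℝ)
    (hc₁ : c₁ = (b + γ / (3 * 𝒞)) / (3 * b * 𝒞 + 2 * γ))
    (hc₂ : c₂ = 1 / (3 * b * 𝒞 + 2 * γ))
    (hc₃ : c₃ = (2 * κ * b * 𝒞 + 2 * a * γ) / (3 * b * 𝒞 + 2 * γ))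
    (R₀ β₃ : ℝ) (hR₀ : 0 < R₀) (hβ₃ : 0 < β₃)
    (hβ₃' : β₃ ≤ min (2 * ν / 3) (min (c₃ / (16 * 𝒞 * c₁)) (1 / (2 * R₀)))) :
    ∃ C₄ : ℝ, 0 < C₄ ∧
      ∀ (ϱ : ℝ), 0 ≤ ϱ → ϱ ≤ R₀ →
        ∀ ρ d Θ Ξ : ℂ,
          C₄ * ϱ ^ 2 *
              ((1 / 2) * ‖ρ‖ ^ 2 - β₃ * ϱ * (ρ * (starRingEnd ℂ) d).re
                + (1 / 2) * ‖d‖ ^ 2 + (c₁ / (4 * 𝒞)) * ‖Θ‖ ^ 2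
                + (3 * c₂ / (4 * γ)) * ‖Ξ‖ ^ 2) ≤
            (3 * β₃ / 4) * ϱ ^ 2 * ‖ρ‖ ^ 2 + (ν - β₃) * ϱ ^ 2 * ‖d‖ ^ 2
              + (c₁ * c₃ / (4 * 𝒞) - 2 * β₃ * c₁ ^ 2) * ϱ ^ 2 * ‖Θ‖ ^ 2
              + (3 * c₂ * ((4 * κ * γ + 9 * a * b * 𝒞) * ϱ ^ 2 / (3 * (3 * b * 𝒞 + 2 * γ))
                  + (2 / 3) * γ + b * 𝒞) / (2 * γ)) * ‖Ξ‖ ^ 2 := by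
  have hD : 0 < 3 * b * 𝒞 + 2 * γ := by positivity
  have hc₁pos : 0 < c₁ := by rw [hc₁]; positivity
  have hc₂pos : 0 < c₂ := by rw [hc₂]; positivity
  have hc₃pos : 0 < c₃ := by rw [hc₃]; positivity
  have hβν : β₃ ≤ 2 * ν / 3 := le_trans hβ₃' (min_le_left _ _)
  have hβc : β₃ ≤ c₃ / (16 * 𝒞 * c₁) :=
    le_trans hβ₃' (le_trans (min_le_right _ _) (min_le_left _ _))
  have hβR : β₃ ≤ 1 / (2 * R₀) :=
    le_trans hβ₃' (le_trans (min_le_right _ _) (min_le_right _ _))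
  clear hβ₃'
  obtain ⟨C₄, hC₄pos, hC₄β, hC₄ν, hC₄c, hC₄R⟩ :
      ∃ C₄ : ℝ, 0 < C₄ ∧ C₄ ≤ β₃ ∧ C₄ ≤ ν / 3 ∧ C₄ ≤ c₃ / 2 ∧
        C₄ ≤ 2 * ((2 / 3) * γ + b * 𝒞) / R₀ ^ 2 := by
    refine ⟨min β₃ (min (ν / 3) (min (c₃ / 2) (2 * ((2 / 3) * γ + b * 𝒞) / R₀ ^ 2))),
      ?_, min_le_left _ _, ?_, ?_, ?_⟩
    · exact lt_min hβ₃ (lt_min (by positivity) (lt_min (by positivity) (by positivity)))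
    · exact le_trans (min_le_right _ _) (min_le_left _ _)
    · exact le_trans (min_le_right _ _) (le_trans (min_le_right _ _) (min_le_left _ _))
    · exact le_trans (min_le_right _ _) (le_trans (min_le_right _ _) (min_le_right _ _))
  refine ⟨C₄, hC₄pos, ?_⟩
  intro ϱ hϱ hϱR ρ d Θ Ξ
  -- cross-term estimate
  have hxabs : |(ρ * (starRingEnd ℂ) d).re| ≤ ‖ρ‖ * ‖d‖ := by
    calc |(ρ * (starRingEnd ℂ) d).re| ≤ ‖ρ * (starRingEnd ℂ) d‖ :=
        Complex.abs_re_le_norm _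
    _ = ‖ρ‖ * ‖d‖ := by
        rw [norm_mul]; simp
  have hxlb : -(‖ρ‖ * ‖d‖) ≤ (ρ * (starRingEnd ℂ) d).re := neg_le_of_abs_le hxabs
  -- β₃ * ϱ ≤ 1/2
  have hβϱ : β₃ * ϱ ≤ 1 / 2 := by
    have h1 : β₃ * ϱ ≤ β₃ * R₀ := mul_le_mul_of_nonneg_left hϱR hβ₃.le
    have h2 : β₃ * R₀ ≤ (1 / (2 * R₀)) * R₀ := mul_le_mul_of_nonneg_right hβR hR₀.le
    have h3 : (1 / (2 * R₀)) * R₀ = 1 / 2 := by field_simp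
    linarith
  -- velocity coefficient
  have h2 : C₄ * (3 / 4) ≤ ν - β₃ := by nlinarith [hC₄ν, hβν, hC₄pos.le]
  -- Θ coefficient
  have h16 : (0:ℝ) < 16 * 𝒞 * c₁ := by positivity
  have hβc' : β₃ * (16 * 𝒞 * c₁) ≤ c₃ := by
    have := mul_le_mul_of_nonneg_right hβc h16.le
    rwa [div_mul_cancel₀ _ (ne_of_gt h16)] at this
  have hkey : 2 * β₃ * c₁ ^ 2 ≤ c₁ * c₃ / (8 * 𝒞) := by
    rw [le_div_iff₀ (by positivity : (0:ℝ) < 8 * 𝒞)]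
    nlinarith [mul_le_mul_of_nonneg_left hβc' hc₁pos.le]
  have hΘ : C₄ * (c₁ / (4 * 𝒞)) ≤ c₁ * c₃ / (4 * 𝒞) - 2 * β₃ * c₁ ^ 2 := by
    have h1 : C₄ * (c₁ / (4 * 𝒞)) ≤ (c₃ / 2) * (c₁ / (4 * 𝒞)) :=
      mul_le_mul_of_nonneg_right hC₄c (by positivity)
    have h2' : (c₃ / 2) * (c₁ / (4 * 𝒞)) = c₁ * c₃ / (8 * 𝒞) := by ring
    have h4 : c₁ * c₃ / (4 * 𝒞) = 2 * (c₁ * c₃ / (8 * 𝒞)) := by ring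
    linarith
  -- Ξ coefficient
  have hϱ2 : ϱ ^ 2 ≤ R₀ ^ 2 := by nlinarith
  have hΞ : C₄ * ϱ ^ 2 * (3 * c₂ / (4 * γ)) ≤
      3 * c₂ * ((4 * κ * γ + 9 * a * b * 𝒞) * ϱ ^ 2 / (3 * (3 * b * 𝒞 + 2 * γ))
        + (2 / 3) * γ + b * 𝒞) / (2 * γ) := by
    have hCR : C₄ * ϱ ^ 2 ≤ 2 * ((2 / 3) * γ + b * 𝒞) := by
      have h1 : C₄ * ϱ ^ 2 ≤ C₄ * R₀ ^ 2 := mul_le_mul_of_nonneg_left hϱ2 hC₄pos.le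
      have h2' : C₄ * R₀ ^ 2 ≤ (2 * ((2 / 3) * γ + b * 𝒞) / R₀ ^ 2) * R₀ ^ 2 :=
        mul_le_mul_of_nonneg_right hC₄R (sq_nonneg _)
      have h3 : (2 * ((2 / 3) * γ + b * 𝒞) / R₀ ^ 2) * R₀ ^ 2
          = 2 * ((2 / 3) * γ + b * 𝒞) := by field_simp
      linarith
    have h1 : C₄ * ϱ ^ 2 * (3 * c₂ / (4 * γ)) ≤
        2 * ((2 / 3) * γ + b * 𝒞) * (3 * c₂ / (4 * γ)) :=
      mul_le_mul_of_nonneg_right hCR (by positivity)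
    have h2' : 2 * ((2 / 3) * γ + b * 𝒞) * (3 * c₂ / (4 * γ)) =
        3 * c₂ * ((2 / 3) * γ + b * 𝒞) / (2 * γ) := by ring
    have h3 : 3 * c₂ * ((2 / 3) * γ + b * 𝒞) / (2 * γ) ≤
        3 * c₂ * ((4 * κ * γ + 9 * a * b * 𝒞) * ϱ ^ 2 / (3 * (3 * b * 𝒞 + 2 * γ))
          + (2 / 3) * γ + b * 𝒞) / (2 * γ) := by
      apply div_le_div_of_nonneg_right _ (by positivity)
      have hnn : 0 ≤ (4 * κ * γ + 9 * a * b * 𝒞) * ϱ ^ 2 / (3 * (3 * b * 𝒞 + 2 * γ)) := by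
        positivity
      nlinarith [hc₂pos.le]
    linarith
  exact lyap_aux C₄ β₃ ϱ (c₁ / (4 * 𝒞))
    (c₁ * c₃ / (4 * 𝒞) - 2 * β₃ * c₁ ^ 2) (3 * c₂ / (4 * γ))
    (3 * c₂ * ((4 * κ * γ + 9 * a * b * 𝒞) * ϱ ^ 2 / (3 * (3 * b * 𝒞 + 2 * γ))
      + (2 / 3) * γ + b * 𝒞) / (2 * γ)) (ν - β₃) ‖ρ‖ ‖d‖ ‖Θ‖ ‖Ξ‖
    ((ρ * (starRingEnd ℂ) d).re)
    hC₄pos hβ₃ hϱ (norm_nonneg _) (norm_nonneg _) hxlb hβϱ hC₄β h2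
    (by positivity) hΘ (by positivity) hΞ
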